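/- Let G be a finite group and let S be a product-one free sequence over G of length d(G) (the small Davenport constant). Then Π(S) = G \ {1_G}, i.e., every non-identity element of G is a product of some nonempty sub-multiset of S in some order. -/
import Mathlib


/-- The set of products of the terms of the multiset `S`, over all orderings. -/
def piSet {G : Type*} [Group G] (S : Multiset G) : Set G :=
  {g | ∃ l : List G, (l : Multiset G) = S ∧ l.prod = g}

/-- The set of subsequence products: products of nonempty sub-multisets of `S`. -/
def subPiSet {G : Type*} [Group G] (S : Multiset G) : Set G :=
  {g | ∃ T : Multiset G, T ≤ S ∧ T ≠ 0 ∧ g ∈ piSet T}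

/-- `S` is a product-one sequence. -/
def IsProductOne {G : Type*} [Group G] (S : Multiset G) : Prop :=
  (1 : G) ∈ piSet S

/-- `S` is product-one free. -/
def ProductOneFree {G : Type*} [Group G] (S : Multiset G) : Prop :=
  (1 : G) ∉ subPiSet S

/-- `S` is an atom (minimal nontrivial product-one sequence) of the monoid `B(G)`. -/
def IsPOAtom {G : Type*} [Group G] (S : Multiset G) : Prop :=
  S ≠ 0 ∧ IsProductOne S ∧
    ∀ T U : Multiset G, IsProductOne T → IsProductOne U → T + U = S → T = 0 ∨ U = 0

/-- The large Davenport constant `D(G)`. -/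
noncomputable def bigD (G : Type*) [Group G] : ℕ :=
  sSup {n | ∃ S : Multiset G, IsPOAtom S ∧ Multiset.card S = n}

/-- The small Davenport constant `d(G)`. -/
noncomputable def smalld (G : Type*) [Group G] : ℕ :=
  sSup {n | ∃ S : Multiset G, ProductOneFree S ∧ Multiset.card S = n}

/-- The set of factorization lengths of `S` into atoms of `B(G)`. -/
def lengthSet {G : Type*} [Group G] (S : Multiset G) : Set ℕ :=
  {k | ∃ L : List (Multiset G), L.length = k ∧ (∀ A ∈ L, IsPOAtom A) ∧ L.sum = S}
lemma pof_card_lt {G : Type*} [Group G] [Fintype G] (S : Multiset G) (h : ProductOneFree S) :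
    Multiset.card S < Fintype.card G := by
  set l := S.toList with hl0
  have hl : (l : Multiset G) = S := S.coe_toList
  have key : ∀ i j : Fin (l.length + 1), i < j → (l.take i).prod ≠ (l.take j).prod := by
    intro i j hij heq
    set m := (l.take (j : ℕ)).drop (i : ℕ) with hm
    have htj : (j : ℕ) ≤ l.length := Nat.lt_succ_iff.mp j.isLt
    have hsplit : (l.take (j : ℕ)).take (i : ℕ) ++ m = l.take (j : ℕ) :=
      List.take_append_drop _ _
    have htt : (l.take (j : ℕ)).take (i : ℕ) = l.take (i : ℕ) := by
      have hij' : (i : ℕ) ≤ (j : ℕ) := le_of_lt hij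
      rw [List.take_take, min_eq_left hij']
    have hprod : (l.take (i : ℕ)).prod * m.prod = (l.take (j : ℕ)).prod := by
      rw [← htt, ← List.prod_append, hsplit]
    rw [← heq] at hprod
    have hmprod : m.prod = 1 := by
      have := mul_left_cancel (a := (l.take (i : ℕ)).prod)
        (by rw [hprod, mul_one] : (l.take (i : ℕ)).prod * m.prod
          = (l.take (i : ℕ)).prod * 1)
      exact this
    have hlen : 0 < m.length := by
      have hij' : (i : ℕ) < (j : ℕ) := hij
      rw [hm, List.length_drop, List.length_take, min_eq_left htj]
      omega
    have hsub : List.Sublist m l :=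
      List.Sublist.trans (List.drop_sublist _ _) (List.take_sublist _ _)
    have hle : (↑m : Multiset G) ≤ S := by
      rw [← hl]
      exact (Multiset.coe_le).mpr hsub.subperm
    exact h ⟨↑m, hle, by
      simp only [ne_eq, Multiset.coe_eq_zero]
      exact List.ne_nil_of_length_pos hlen, ⟨m, rfl, hmprod⟩⟩
  have hinj : Function.Injective (fun i : Fin (l.length + 1) => (l.take (i : ℕ)).prod) := by
    intro i j heq
    by_contra hne
    rcases Ne.lt_or_gt hne with hlt | hlt
    · exact key i j hlt heq
    · exact key j i hlt heq.symm
  have := Fintype.card_le_of_injective _ hinj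
  rw [Fintype.card_fin] at this
  have hcard : l.length = Multiset.card S := by rw [hl0, Multiset.length_toList]
  omega

lemma pof_bddAbove {G : Type*} [Group G] [Fintype G] :
    BddAbove {n | ∃ S : Multiset G, ProductOneFree S ∧ Multiset.card S = n} := by
  refine ⟨Fintype.card G, ?_⟩
  rintro n ⟨S, hS, rfl⟩
  exact (pof_card_lt S hS).le

theorem stmt1 {G : Type*} [Group G] [Fintype G] (S : Multiset G) (hS : ProductOneFree S)
    (hcard : Multiset.card S = smalld G) :
    subPiSet S = {g : G | g ≠ 1} := by
  classical
  ext g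
  simp only [Set.mem_setOf_eq]
  constructor
  · rintro hg rfl
    exact hS hg
  · intro hg
    -- S' = g⁻¹ ::ₘ S is not product-one free
    have hnotfree : ¬ ProductOneFree (g⁻¹ ::ₘ S) := by
      intro hfree
      have hmem : Multiset.card (g⁻¹ ::ₘ S) ∈
          {n | ∃ T : Multiset G, ProductOneFree T ∧ Multiset.card T = n} :=
        ⟨g⁻¹ ::ₘ S, hfree, rfl⟩
      have := le_csSup pof_bddAbove hmem
      rw [Multiset.card_cons, hcard] at this
      exact absurd this (by simp [smalld])
    rw [ProductOneFree, not_not] at hnotfree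
    obtain ⟨T, hTle, hT0, l, hlT, hlprod⟩ := hnotfree
    have hginv : g⁻¹ ∈ T := by
      by_contra hni
      refine hS ⟨T, ?_, hT0, l, hlT, hlprod⟩
      rw [Multiset.le_iff_count]
      intro a
      have := Multiset.le_iff_count.mp hTle a
      rcases eq_or_ne a g⁻¹ with rfl | hne
      · simp [Multiset.count_eq_zero_of_notMem hni]
      · rwa [Multiset.count_cons_of_ne hne] at this
    have hginvl : g⁻¹ ∈ l := by
      rw [← Multiset.mem_coe, hlT]; exact hginv
    obtain ⟨a, b, rfl⟩ := List.append_of_mem hginvl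
    have hprodab : a.prod * (g⁻¹ * b.prod) = 1 := by
      rw [← List.prod_cons, ← List.prod_append]; exact hlprod
    have hgprod : (b ++ a).prod = g := by
      rw [List.prod_append]
      have h1 : a.prod * g⁻¹ * b.prod = 1 := by rw [mul_assoc]; exact hprodab
      have h2 : a.prod * g⁻¹ = b.prod⁻¹ := eq_inv_of_mul_eq_one_left h1
      have h3 : g⁻¹ = a.prod⁻¹ * b.prod⁻¹ := by rw [← h2]; group
      calc b.prod * a.prod = (g⁻¹)⁻¹ := by rw [h3, mul_inv_rev, inv_inv, inv_inv]
        _ = g := inv_inv g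
    refine ⟨↑(b ++ a), ?_, ?_, ⟨b ++ a, rfl, hgprod⟩⟩
    · -- ↑(b ++ a) ≤ S
      have hTeq : T = g⁻¹ ::ₘ ↑(b ++ a) := by
        rw [← hlT]
        simp only [← Multiset.coe_add, ← Multiset.cons_coe]
        rw [← Multiset.singleton_add, ← Multiset.singleton_add]
        abel
      rw [hTeq] at hTle
      exact (Multiset.cons_le_cons_iff g⁻¹).mp hTle
    · intro h0
      rw [Multiset.coe_eq_zero] at h0
      rw [h0] at hgprod
      exact hg (hgprod.symm ▸ rfl)
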